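/- For all integers m ≥ 1 and k ≥ 3, setting t = 2·⌈(3^k/(3^k − 1))^{m−1}⌉, the t-fold sumset {x_1^m + x_2^m + … + x_t^m : x_1, …, x_t ∈ 𝒞} contains a closed interval of length 2·(1 − ((3^k − 1)/3^k)^m). -/

import Mathlib

open Finset Filter Topology Function

/-- The middle-thirds Cantor set: all reals of the form `∑ tᵢ / 3^i` (`i ≥ 1`)
with each `tᵢ ∈ {0, 2}`. -/
def middleThirdsCantor : Set ℝ :=
  {x : ℝ | ∃ t : ℕ → ℝ, (∀ i, t i = 0 ∨ t i = 2) ∧ x = ∑' i : ℕ, t i / 3 ^ (i + 1)}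

/-- width of the interval allotted to coordinate `i` after `n` single-digit steps
(round robin over the `t` coordinates). -/
noncomputable def wfun (t n : ℕ) (i : Fin t) : ℝ :=
  (1/3 : ℝ) ^ (n / t + if (i : ℕ) < n % t then 1 else 0)

lemma wfun_pos {t n : ℕ} (i : Fin t) : 0 < wfun t n i := pow_pos (by norm_num) _

lemma wfun_lb {t : ℕ} (n : ℕ) (i : Fin t) : (1/3 : ℝ) ^ (n / t + 1) ≤ wfun t n i := by
  unfold wfun
  apply pow_le_pow_of_le_one (by norm_num) (by norm_num)
  split <;> omega

lemma wfun_zero {t : ℕ} (ht0 : 0 < t) (i : Fin t) : wfun t 0 i = 1 := by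
  simp [wfun, Nat.zero_div, Nat.zero_mod]

lemma wfun_mod {t n : ℕ} (ht0 : 0 < t) :
    wfun t n ⟨n % t, Nat.mod_lt _ ht0⟩ = (1/3 : ℝ) ^ (n / t) := by
  simp [wfun]

lemma wfun_mul {t : ℕ} (ht0 : 0 < t) (K : ℕ) (i : Fin t) :
    wfun t (K * t) i = (1/3 : ℝ) ^ K := by
  have h1 : K * t / t = K := Nat.mul_div_cancel K ht0
  have h2 : K * t % t = 0 := Nat.mul_mod_left K t
  simp [wfun, h1, h2]

lemma wfun_succ {t : ℕ} (ht0 : 0 < t) (n : ℕ) (i : Fin t) :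
    wfun t (n+1) i = if (i : ℕ) = n % t then wfun t n i / 3 else wfun t n i := by
  have hr : n % t < t := Nat.mod_lt _ ht0
  rcases eq_or_lt_of_le (Nat.succ_le_of_lt hr) with he | hlt
  · -- n % t + 1 = t
    have hn : n + 1 = t * (n / t + 1) := by
      rw [Nat.mul_succ]
      have := Nat.div_add_mod n t; omega
    have h1 : (n+1) % t = 0 := by rw [hn]; exact Nat.mul_mod_right _ _
    have h2 : (n+1) / t = n / t + 1 := by rw [hn]; exact Nat.mul_div_cancel_left _ ht0
    by_cases hi : (i : ℕ) = n % t
    · have hb : ¬ ((i : ℕ) < n % t) := by omega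
      simp only [wfun, h1, h2, Nat.not_lt_zero, if_false, if_pos hi, if_neg hb]
      rw [add_zero, add_zero, pow_succ]; ring
    · have ha : (i : ℕ) < n % t := by omega
      simp only [wfun, h1, h2, Nat.not_lt_zero, if_false, if_neg hi, if_pos ha]
  · -- n % t + 1 < t
    have hn : n + 1 = t * (n / t) + (n % t + 1) := by
      have := Nat.div_add_mod n t; omega
    have h1 : (n+1) % t = n % t + 1 := by
      rw [hn, Nat.mul_add_mod, Nat.mod_eq_of_lt hlt]
    have h2 : (n+1) / t = n / t := by
      rw [hn, Nat.mul_add_div ht0, Nat.div_eq_of_lt hlt, add_zero]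
    by_cases hi : (i : ℕ) = n % t
    · have ha : (i : ℕ) < n % t + 1 := by omega
      have hb : ¬ ((i : ℕ) < n % t) := by omega
      simp only [wfun, h1, h2, if_pos hi, if_pos ha, if_neg hb]
      rw [add_zero, pow_succ]; ring
    · have : ((i : ℕ) < n % t + 1) ↔ ((i : ℕ) < n % t) := by omega
      simp only [wfun, h1, h2, if_neg hi, this]

/-- Invariant for the greedy construction. -/
def GInv (t : ℕ) (g : ℝ → ℝ) (y : ℝ) (n : ℕ) (lo : Fin t → ℝ) : Prop :=
  (∀ i, 0 ≤ lo i) ∧ (∀ i, lo i + wfun t n i ≤ 1) ∧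
    (∑ i, g (lo i)) ≤ y ∧ y ≤ ∑ i, g (lo i + wfun t n i)

section step

variable {t : ℕ} {g : ℝ → ℝ} {μ M y : ℝ}

lemma gmono (hμ : 0 < μ)
    (hg : ∀ u v : ℝ, 0 ≤ u → u ≤ v → v ≤ 1 →
      μ * (v - u) ≤ g v - g u ∧ g v - g u ≤ M * (v - u)) :
    ∀ u v : ℝ, 0 ≤ u → u ≤ v → v ≤ 1 → g u ≤ g v := by
  intro u v hu huv hv
  have h := (hg u v hu huv hv).1
  nlinarith [mul_nonneg hμ.le (sub_nonneg.2 huv)]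

lemma inv_step (ht : 2 ≤ t) (hμ : 0 < μ)
    (hg : ∀ u v : ℝ, 0 ≤ u → u ≤ v → v ≤ 1 →
      μ * (v - u) ≤ g v - g u ∧ g v - g u ≤ M * (v - u))
    (hM : M ≤ ((t : ℝ) - 1) * μ)
    (n : ℕ) (lo : Fin t → ℝ) (h : GInv t g y n lo) :
    ∃ lo' : Fin t → ℝ, (∃ ε : ℝ, (ε = 0 ∨ ε = 2) ∧
      lo' = Function.update lo ⟨n % t, Nat.mod_lt _ (by omega)⟩
        (lo ⟨n % t, Nat.mod_lt _ (by omega)⟩ + ε * (1/3 : ℝ) ^ (n / t + 1))) ∧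
      GInv t g y (n+1) lo' := by
  have ht0 : 0 < t := by omega
  set j : Fin t := ⟨n % t, Nat.mod_lt _ ht0⟩ with hj
  set W1 : ℝ := (1/3 : ℝ) ^ (n / t + 1) with hW1
  have hW1pos : 0 < W1 := pow_pos (by norm_num) _
  have hwj : wfun t n j = 3 * W1 := by
    rw [wfun_mod ht0, hW1, pow_succ]; ring
  have hwj' : wfun t (n+1) j = W1 := by
    rw [wfun_succ ht0, if_pos rfl, hwj]; ring
  obtain ⟨h0, h1, hL, hU⟩ := h
  have hmono := gmono hμ hg
  have hsplit : ∀ F : Fin t → ℝ, ∑ i, F i = F j + ∑ i ∈ univ.erase j, F i :=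
    fun F => (Finset.add_sum_erase _ F (mem_univ j)).symm
  set SL : ℝ := ∑ i ∈ univ.erase j, g (lo i) with hSL
  set SH : ℝ := ∑ i ∈ univ.erase j, g (lo i + wfun t n i) with hSH
  have hLj : g (lo j) + SL ≤ y := by
    have h := hL
    rw [hsplit (fun i => g (lo i))] at h
    rw [hSL]; exact h
  have hUj : y ≤ g (lo j + wfun t n j) + SH := by
    have h := hU
    rw [hsplit (fun i => g (lo i + wfun t n i))] at h
    rw [hSH]; exact h
  -- generic computations for an update
  have hupd_lower : ∀ v : ℝ, ∑ i, g (Function.update lo j v i) = g v + SL := by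
    intro v
    rw [hsplit (fun i => g (Function.update lo j v i))]
    rw [hSL, Function.update_self]
    congr 1
    refine Finset.sum_congr rfl fun i hi => ?_
    rw [Function.update_of_ne (Finset.ne_of_mem_erase hi)]
  have hupd_upper : ∀ v : ℝ,
      ∑ i, g (Function.update lo j v i + wfun t (n+1) i) = g (v + W1) + SH := by
    intro v
    rw [hsplit (fun i => g (Function.update lo j v i + wfun t (n+1) i))]
    rw [hSH, Function.update_self, hwj']
    congr 1
    refine Finset.sum_congr rfl fun i hi => ?_
    have hij : i ≠ j := Finset.ne_of_mem_erase hi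
    have hij' : (i : ℕ) ≠ n % t := fun hc => hij (Fin.ext hc)
    rw [Function.update_of_ne hij, wfun_succ ht0, if_neg hij']
  have hlo1 : lo j + 3 * W1 ≤ 1 := by have := h1 j; rwa [hwj] at this
  have hlo0 : 0 ≤ lo j := h0 j
  by_cases hc : y ≤ g (lo j + W1) + SH
  · -- choose ε = 0
    refine ⟨Function.update lo j (lo j + 0 * W1), ⟨0, Or.inl rfl, rfl⟩, ?_, ?_, ?_, ?_⟩
    · intro i
      rcases eq_or_ne i j with rfl | hij
      · rw [Function.update_self]; linarith
      · rw [Function.update_of_ne hij]; exact h0 i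
    · intro i
      rcases eq_or_ne i j with rfl | hij
      · rw [Function.update_self, hwj']; linarith
      · have hij' : (i : ℕ) ≠ n % t := fun hc' => hij (Fin.ext hc')
        rw [Function.update_of_ne hij, wfun_succ ht0, if_neg hij']; exact h1 i
    · rw [hupd_lower]
      have : lo j + 0 * W1 = lo j := by ring
      rw [this]; exact hLj
    · rw [hupd_upper]
      have : lo j + 0 * W1 + W1 = lo j + W1 := by ring
      rw [this]; exact hc
  · -- choose ε = 2
    push_neg at hc
    refine ⟨Function.update lo j (lo j + 2 * W1), ⟨2, Or.inr rfl, rfl⟩, ?_, ?_, ?_, ?_⟩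
    · intro i
      rcases eq_or_ne i j with rfl | hij
      · rw [Function.update_self]; linarith
      · rw [Function.update_of_ne hij]; exact h0 i
    · intro i
      rcases eq_or_ne i j with rfl | hij
      · rw [Function.update_self, hwj']; linarith
      · have hij' : (i : ℕ) ≠ n % t := fun hc' => hij (Fin.ext hc')
        rw [Function.update_of_ne hij, wfun_succ ht0, if_neg hij']; exact h1 i
    · -- the key gap estimate
      rw [hupd_lower]
      have hkey : g (lo j + 2 * W1) - g (lo j + W1) ≤ M * W1 := by
        have h2 := (hg (lo j + W1) (lo j + 2 * W1) (by linarith) (by linarith)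
          (by linarith)).2
        have he : (lo j + 2 * W1) - (lo j + W1) = W1 := by ring
        rwa [he] at h2
      have hSHL : μ * ((t : ℝ) - 1) * W1 ≤ SH - SL := by
        have hterm : ∀ i ∈ univ.erase j, μ * W1 ≤ g (lo i + wfun t n i) - g (lo i) := by
          intro i _
          have hwi := wfun_lb n i
          have hwip := wfun_pos (t := t) (n := n) i
          have h2 := (hg (lo i) (lo i + wfun t n i) (h0 i) (by linarith) (h1 i)).1
          have he : (lo i + wfun t n i) - lo i = wfun t n i := by ring
          rw [he] at h2
          calc μ * W1 ≤ μ * wfun t n i := by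
                apply mul_le_mul_of_nonneg_left _ hμ.le
                rw [hW1]; exact hwi
            _ ≤ _ := h2
        have hcard : (univ.erase j).card = t - 1 := by
          rw [Finset.card_erase_of_mem (mem_univ j), Finset.card_univ, Fintype.card_fin]
        calc μ * ((t : ℝ) - 1) * W1 = (univ.erase j).card * (μ * W1) := by
              rw [hcard]
              have : ((t - 1 : ℕ) : ℝ) = (t : ℝ) - 1 := by
                have : (1 : ℕ) ≤ t := by omega
                push_cast [Nat.cast_sub this]; ring
              rw [this]; ring
          _ = ∑ _i ∈ univ.erase j, μ * W1 := by rw [Finset.sum_const, nsmul_eq_mul]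
          _ ≤ ∑ i ∈ univ.erase j, (g (lo i + wfun t n i) - g (lo i)) :=
              Finset.sum_le_sum hterm
          _ = SH - SL := by rw [hSH, hSL, Finset.sum_sub_distrib]
      have hMW : M * W1 ≤ ((t : ℝ) - 1) * μ * W1 :=
        mul_le_mul_of_nonneg_right hM hW1pos.le
      linarith
    · rw [hupd_upper]
      have : lo j + 2 * W1 + W1 = lo j + wfun t n j := by rw [hwj]; ring
      rw [this]; exact hUj

end step

lemma exists_digits_sum_eq
    (t : ℕ) (ht : 2 ≤ t) (g : ℝ → ℝ) (μ M : ℝ) (hμ : 0 < μ)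
    (hg : ∀ u v : ℝ, 0 ≤ u → u ≤ v → v ≤ 1 →
      μ * (v - u) ≤ g v - g u ∧ g v - g u ≤ M * (v - u))
    (hM : M ≤ ((t : ℝ) - 1) * μ)
    (y : ℝ) (hy : (t : ℝ) * g 0 ≤ y) (hy' : y ≤ (t : ℝ) * g 1) :
    ∃ c : Fin t → ℝ,
      (∀ j, ∃ d : ℕ → ℝ, (∀ i, d i = 0 ∨ d i = 2) ∧ c j = ∑' i, d i / 3 ^ (i + 1)) ∧
      y = ∑ j, g (c j) := by
  have ht0 : 0 < t := by omega
  have hmono := gmono hμ hg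
  -- base invariant
  have hbase : GInv t g y 0 (fun _ => 0) := by
    refine ⟨fun i => le_refl 0, fun i => by rw [wfun_zero ht0]; norm_num, ?_, ?_⟩
    · calc ∑ _i : Fin t, g 0 = (t : ℝ) * g 0 := by
            rw [Finset.sum_const, Finset.card_univ, Fintype.card_fin, nsmul_eq_mul]
        _ ≤ y := hy
    · calc y ≤ (t : ℝ) * g 1 := hy'
        _ = ∑ _i : Fin t, g 1 := by
            rw [Finset.sum_const, Finset.card_univ, Fintype.card_fin, nsmul_eq_mul]
        _ = ∑ i : Fin t, g ((0 : ℝ) + wfun t 0 i) := by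
            refine Finset.sum_congr rfl fun i _ => ?_
            rw [wfun_zero ht0]; norm_num
  choose f hf1 hf2 using fun n lo h => inv_step (y := y) ht hμ hg hM n lo h
  let F : ∀ _ : ℕ, {lo : Fin t → ℝ // GInv t g y _ lo} :=
    fun n => Nat.rec (motive := fun n => {lo : Fin t → ℝ // GInv t g y n lo})
      ⟨fun _ => 0, hbase⟩ (fun n p => ⟨f n p.1 p.2, hf2 n p.1 p.2⟩) n
  let lo : ℕ → Fin t → ℝ := fun n => (F n).1
  have hInv : ∀ n, GInv t g y n (lo n) := fun n => (F n).2
  have hlo0 : ∀ i, lo 0 i = 0 := fun i => rfl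
  have hlo_succ : ∀ n, ∃ ε : ℝ, (ε = 0 ∨ ε = 2) ∧
      lo (n+1) = Function.update (lo n) ⟨n % t, Nat.mod_lt _ ht0⟩
        (lo n ⟨n % t, Nat.mod_lt _ ht0⟩ + ε * (1/3 : ℝ) ^ (n / t + 1)) :=
    fun n => hf1 n (F n).1 (F n).2
  -- digit data
  have hdig : ∀ n, ∃ ε : ℝ, (ε = 0 ∨ ε = 2) ∧
      lo (n+1) ⟨n % t, Nat.mod_lt _ ht0⟩
        = lo n ⟨n % t, Nat.mod_lt _ ht0⟩ + ε * (1/3 : ℝ) ^ (n / t + 1) ∧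
      ∀ i : Fin t, i ≠ ⟨n % t, Nat.mod_lt _ ht0⟩ → lo (n+1) i = lo n i := by
    intro n
    obtain ⟨ε, hε, heq⟩ := hlo_succ n
    exact ⟨ε, hε, by rw [heq, Function.update_self],
      fun i hi => by rw [heq, Function.update_of_ne hi]⟩
  choose ε hε0 hεeq hεoff using hdig
  -- monotonicity and nesting
  have hle : ∀ n (i : Fin t), lo n i ≤ lo (n+1) i := by
    intro n i
    rcases eq_or_ne i ⟨n % t, Nat.mod_lt _ ht0⟩ with rfl | hi
    · rw [hεeq n]
      have : (0:ℝ) ≤ ε n * (1/3 : ℝ) ^ (n / t + 1) := by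
        rcases hε0 n with h | h <;> rw [h] <;> positivity
      linarith
    · rw [hεoff n i hi]
  have hnest : ∀ n (i : Fin t), lo (n+1) i + wfun t (n+1) i ≤ lo n i + wfun t n i := by
    intro n i
    rcases eq_or_ne i ⟨n % t, Nat.mod_lt _ ht0⟩ with rfl | hi
    · rw [hεeq n, wfun_succ ht0, if_pos rfl, wfun_mod ht0]
      have h3 : (1/3 : ℝ) ^ (n / t) / 3 = (1/3 : ℝ) ^ (n / t + 1) := by
        rw [pow_succ]; ring
      rw [h3]
      have hε2 : ε n ≤ 2 := by rcases hε0 n with h | h <;> rw [h] <;> norm_num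
      have hp : (0:ℝ) < (1/3 : ℝ) ^ (n / t + 1) := pow_pos (by norm_num) _
      have : (1/3 : ℝ) ^ (n / t) = 3 * (1/3 : ℝ) ^ (n / t + 1) := by
        rw [pow_succ]; ring
      rw [this]; nlinarith
    · have hi' : (i : ℕ) ≠ n % t := fun hc => hi (Fin.ext hc)
      rw [hεoff n i hi, wfun_succ ht0, if_neg hi']
  have hchain : ∀ N K (i : Fin t),
      lo (N + K) i + wfun t (N + K) i ≤ lo N i + wfun t N i := by
    intro N K i
    induction K with
    | zero => simp
    | succ K ih =>
        calc lo (N + (K+1)) i + wfun t (N + (K+1)) i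
            ≤ lo (N + K) i + wfun t (N + K) i := hnest (N + K) i
          _ ≤ _ := ih
  -- summability and the limit values
  have hpartial : ∀ (N : ℕ) (j : Fin t),
      ∑ n ∈ Finset.range N, (lo (n+1) j - lo n j) = lo N j := by
    intro N j
    rw [Finset.sum_range_sub (fun n => lo n j), hlo0 j, sub_zero]
  have hincnn : ∀ (j : Fin t) n, 0 ≤ lo (n+1) j - lo n j :=
    fun j n => sub_nonneg.2 (hle n j)
  have hsum : ∀ j : Fin t, Summable (fun n => lo (n+1) j - lo n j) := by
    intro j
    apply summable_of_sum_range_le (c := 1) (hincnn j)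
    intro N
    rw [hpartial N j]
    have h2 := (hInv N).2.1 j
    have := wfun_pos (t := t) (n := N) j
    linarith
  set c : Fin t → ℝ := fun j => ∑' n, (lo (n+1) j - lo n j) with hc
  have hcl : ∀ (N : ℕ) (j : Fin t), lo N j ≤ c j := by
    intro N j
    rw [← hpartial N j]
    exact Summable.sum_le_tsum (Finset.range N) (fun n _ => hincnn j n) (hsum j)
  have hcu : ∀ (N : ℕ) (j : Fin t), c j ≤ lo N j + wfun t N j := by
    intro N j
    have htend : Tendsto (fun K => lo K j) atTop (𝓝 (c j)) := by
      have h := (hsum j).hasSum.tendsto_sum_nat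
      have heq : (fun K => ∑ n ∈ Finset.range K, (lo (n+1) j - lo n j))
          = fun K => lo K j := funext fun K => hpartial K j
      rwa [heq] at h
    refine le_of_tendsto htend ?_
    filter_upwards [eventually_ge_atTop N] with K hK
    obtain ⟨K', rfl⟩ := Nat.exists_eq_add_of_le hK
    have h1 := hchain N K' j
    have := wfun_pos (t := t) (n := N + K') j
    linarith
  -- membership: extract digits for each coordinate
  have hmem : ∀ j : Fin t, ∃ d : ℕ → ℝ, (∀ i, d i = 0 ∨ d i = 2) ∧
      c j = ∑' i, d i / 3 ^ (i + 1) := by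
    intro j
    refine ⟨fun i => ε ((j : ℕ) + i * t), fun i => hε0 _, ?_⟩
    have hmod : ∀ i : ℕ, ((j : ℕ) + i * t) % t = (j : ℕ) := by
      intro i
      rw [Nat.add_mul_mod_self_right, Nat.mod_eq_of_lt j.isLt]
    have hdiv : ∀ i : ℕ, ((j : ℕ) + i * t) / t = i := by
      intro i
      rw [Nat.add_mul_div_right _ _ ht0, Nat.div_eq_of_lt j.isLt, zero_add]
    have hjfin : ∀ i : ℕ, (⟨((j : ℕ) + i * t) % t, Nat.mod_lt _ ht0⟩ : Fin t) = j := by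
      intro i; exact Fin.ext (hmod i)
    have hinj : Function.Injective (fun i : ℕ => (j : ℕ) + i * t) := by
      intro a b hab
      simp only [add_right_inj] at hab
      exact Nat.eq_of_mul_eq_mul_right ht0 hab
    have hsupp : Function.support (fun n => lo (n+1) j - lo n j)
        ⊆ Set.range (fun i : ℕ => (j : ℕ) + i * t) := by
      intro n hn
      by_cases hmt : (⟨n % t, Nat.mod_lt _ ht0⟩ : Fin t) = j
      · refine ⟨n / t, ?_⟩
        have h1 : (j : ℕ) = n % t := by rw [← hmt]
        have h2 := Nat.div_add_mod n t
        have h3 : n / t * t = t * (n / t) := Nat.mul_comm _ _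
        simp only []
        omega
      · exfalso; apply hn
        have h4 := hεoff n j (fun hc' => hmt hc'.symm)
        show lo (n+1) j - lo n j = 0
        rw [h4, sub_self]
    have hstep : ∀ i : ℕ,
        lo ((j : ℕ) + i * t + 1) j - lo ((j : ℕ) + i * t) j
          = ε ((j : ℕ) + i * t) / 3 ^ (i + 1) := by
      intro i
      have h1 := hεeq ((j : ℕ) + i * t)
      rw [hjfin i] at h1
      rw [h1, hdiv i]
      have : (1/3 : ℝ) ^ (i + 1) = 1 / 3 ^ (i+1) := by rw [div_pow, one_pow]
      rw [this]; ring
    calc c j = ∑' i : ℕ, (lo ((j : ℕ) + i * t + 1) j - lo ((j : ℕ) + i * t) j) :=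
          (hinj.tsum_eq hsupp).symm
      _ = ∑' i : ℕ, ε ((j : ℕ) + i * t) / 3 ^ (i + 1) := tsum_congr hstep
  -- the value equality
  have habs : ∀ K : ℕ, |y - ∑ j, g (c j)| ≤ M * t * (1/3 : ℝ) ^ K := by
    intro K
    set N := K * t with hN
    have hwK : ∀ i : Fin t, wfun t N i = (1/3 : ℝ) ^ K := wfun_mul ht0 K
    obtain ⟨h0, h1, hL, hU⟩ := hInv N
    have hb : ∀ j : Fin t, 0 ≤ lo N j ∧ lo N j ≤ c j ∧ c j ≤ lo N j + wfun t N j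
        ∧ lo N j + wfun t N j ≤ 1 := fun j => ⟨h0 j, hcl N j, hcu N j, h1 j⟩
    have hLS : ∑ j, g (lo N j) ≤ ∑ j, g (c j) := by
      refine Finset.sum_le_sum fun j _ => ?_
      obtain ⟨hb1, hb2, hb3, hb4⟩ := hb j
      exact hmono _ _ hb1 hb2 (by linarith)
    have hSU : ∑ j, g (c j) ≤ ∑ j, g (lo N j + wfun t N j) := by
      refine Finset.sum_le_sum fun j _ => ?_
      obtain ⟨hb1, hb2, hb3, hb4⟩ := hb j
      exact hmono _ _ (by linarith) hb3 hb4
    have hwidth : ∑ j, g (lo N j + wfun t N j) - ∑ j, g (lo N j)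
        ≤ M * t * (1/3 : ℝ) ^ K := by
      rw [← Finset.sum_sub_distrib]
      calc ∑ j, (g (lo N j + wfun t N j) - g (lo N j))
          ≤ ∑ _j : Fin t, M * (1/3 : ℝ) ^ K := by
            refine Finset.sum_le_sum fun j _ => ?_
            obtain ⟨hb1, hb2, hb3, hb4⟩ := hb j
            have h2 := (hg (lo N j) (lo N j + wfun t N j) hb1
              (by have := wfun_pos (t := t) (n := N) j; linarith) hb4).2
            have he : lo N j + wfun t N j - lo N j = wfun t N j := by ring
            rw [he, hwK j] at h2
            rw [hwK j]
            exact h2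
        _ = M * t * (1/3 : ℝ) ^ K := by
            rw [Finset.sum_const, Finset.card_univ, Fintype.card_fin, nsmul_eq_mul]
            ring
    rw [abs_le]
    constructor <;> linarith
  have htend0 : Tendsto (fun K : ℕ => M * t * (1/3 : ℝ) ^ K) atTop (𝓝 0) := by
    have h := tendsto_pow_atTop_nhds_zero_of_lt_one (by norm_num : (0:ℝ) ≤ 1/3)
      (by norm_num : (1/3 : ℝ) < 1)
    have := h.const_mul (M * t)
    simpa using this
  have habs0 : |y - ∑ j, g (c j)| ≤ 0 := ge_of_tendsto' htend0 habs
  have : y - ∑ j, g (c j) = 0 := abs_nonpos_iff.mp habs0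
  exact ⟨c, hmem, by linarith⟩


lemma two_thirds_geom_sum (k : ℕ) :
    ∑ i ∈ Finset.range k, (2:ℝ) / 3 ^ (i + 1) = ((3:ℝ) ^ k - 1) / 3 ^ k := by
  induction k with
  | zero => simp
  | succ k ih =>
      rw [Finset.sum_range_succ, ih]
      have h3k : (3:ℝ) ^ k ≠ 0 := by positivity
      field_simp
      ring

lemma mem_cantor_affine (k : ℕ) (c : ℝ) (d : ℕ → ℝ) (hd : ∀ i, d i = 0 ∨ d i = 2)
    (hc : c = ∑' i : ℕ, d i / 3 ^ (i + 1)) :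
    ((3:ℝ) ^ k - 1) / 3 ^ k + ((3:ℝ) ^ k)⁻¹ * c ∈ middleThirdsCantor := by
  have hdnn : ∀ i, (0:ℝ) ≤ d i := by
    intro i; rcases hd i with h | h <;> rw [h] <;> norm_num
  have hdub : ∀ i, d i ≤ 2 := by
    intro i; rcases hd i with h | h <;> rw [h] <;> norm_num
  have hDok : ∀ i : ℕ, (if i < k then (2:ℝ) else d (i - k)) = 0 ∨
      (if i < k then (2:ℝ) else d (i - k)) = 2 := by
    intro i
    by_cases hik : i < k
    · rw [if_pos hik]; right; rfl
    · rw [if_neg hik]; exact hd _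
  refine ⟨fun i => if i < k then 2 else d (i - k), hDok, ?_⟩
  have hgeo : Summable (fun i : ℕ => (2:ℝ) / 3 ^ (i + 1)) := by
    have h := summable_geometric_of_lt_one (by norm_num : (0:ℝ) ≤ 1/3)
      (by norm_num : (1/3:ℝ) < 1)
    have heq : (fun i : ℕ => (2:ℝ) / 3 ^ (i + 1)) = fun i => (2/3) * (1/3) ^ i := by
      funext i
      rw [pow_succ]
      field_simp
      ring
      rw [← mul_pow]; norm_num
    rw [heq]
    exact h.mul_left _
  have hsummD : Summable (fun i : ℕ =>
      (if i < k then (2:ℝ) else d (i - k)) / 3 ^ (i + 1)) := by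
    apply Summable.of_nonneg_of_le _ _ hgeo
    · intro i
      apply div_nonneg _ (by positivity)
      by_cases hik : i < k
      · rw [if_pos hik]; norm_num
      · rw [if_neg hik]; exact hdnn _
    · intro i
      gcongr
      by_cases hik : i < k
      · rw [if_pos hik]
      · rw [if_neg hik]; exact hdub _
  rw [← Summable.sum_add_tsum_nat_add k hsummD]
  have hfirst : ∑ i ∈ Finset.range k,
      (if i < k then (2:ℝ) else d (i - k)) / 3 ^ (i + 1) = ((3:ℝ) ^ k - 1) / 3 ^ k := by
    rw [← two_thirds_geom_sum k]
    refine Finset.sum_congr rfl fun i hi => ?_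
    rw [if_pos (Finset.mem_range.mp hi)]
  have hsecond : ∑' i : ℕ,
      (if i + k < k then (2:ℝ) else d (i + k - k)) / 3 ^ (i + k + 1)
      = ((3:ℝ) ^ k)⁻¹ * c := by
    have h1 : ∀ i : ℕ, (if i + k < k then (2:ℝ) else d (i + k - k)) / 3 ^ (i + k + 1)
        = ((3:ℝ) ^ k)⁻¹ * (d i / 3 ^ (i + 1)) := by
      intro i
      rw [if_neg (by omega), Nat.add_sub_cancel]
      have h3 : (3:ℝ) ^ (i + k + 1) = 3 ^ (i + 1) * 3 ^ k := by
        rw [← pow_add]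
        congr 1
        omega
      rw [h3, div_mul_eq_div_div, div_eq_mul_inv (d i / 3 ^ (i+1)), mul_comm]
    rw [tsum_congr h1, tsum_mul_left, ← hc]
  rw [hfirst, hsecond]

theorem sumset_contains_interval_general (m k : ℕ) (hm : 1 ≤ m) (hk : 3 ≤ k) :
    ∃ a b : ℝ, b - a = 2 * (1 - (((3 : ℝ) ^ k - 1) / 3 ^ k) ^ m) ∧
      Set.Icc a b ⊆
        {x : ℝ | ∃ f : Fin (2 * ⌈((3 : ℝ) ^ k / ((3 : ℝ) ^ k - 1)) ^ (m - 1)⌉₊) → ℝ,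
          (∀ j, f j ∈ middleThirdsCantor) ∧ x = ∑ j, f j ^ m} := by
  have h3k : (1 : ℝ) < 3 ^ k := by
    apply one_lt_pow₀ (by norm_num : (1:ℝ) < 3) (by omega)
  have h3k0 : (3 : ℝ) ^ k ≠ 0 := by positivity
  set A : ℝ := ((3 : ℝ) ^ k - 1) / 3 ^ k with hA
  have hA0 : 0 < A := div_pos (by linarith) (by linarith)
  have hA1 : A < 1 := by rw [hA, div_lt_one (by linarith)]; linarith
  have hδ : 1 - A = ((3 : ℝ) ^ k)⁻¹ := by
    rw [hA]; field_simp
    ring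
  have hinv : (3 : ℝ) ^ k / ((3 : ℝ) ^ k - 1) = A⁻¹ := by rw [hA, inv_div]
  set N : ℕ := ⌈((3 : ℝ) ^ k / ((3 : ℝ) ^ k - 1)) ^ (m - 1)⌉₊ with hN
  have hN1 : 1 ≤ N := by
    rw [hN]
    apply Nat.one_le_ceil_iff.mpr
    rw [hinv]
    positivity
  have hNA : A⁻¹ ^ (m - 1) ≤ (N : ℝ) := by rw [hN, ← hinv]; exact Nat.le_ceil _
  set t : ℕ := 2 * N with htdef
  have ht : 2 ≤ t := by omega
  set g : ℝ → ℝ := fun c => (A + (1 - A) * c) ^ m with hgdef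
  have hmR : (0 : ℝ) < m := by exact_mod_cast hm
  set μ : ℝ := (1 - A) * m * A ^ (m - 1) with hμdef
  set M : ℝ := (1 - A) * m with hMdef
  have hμ : 0 < μ := by
    rw [hμdef]
    have : (0:ℝ) < 1 - A := by linarith
    positivity
  have hg : ∀ u v : ℝ, 0 ≤ u → u ≤ v → v ≤ 1 →
      μ * (v - u) ≤ g v - g u ∧ g v - g u ≤ M * (v - u) := by
    intro u v hu huv hv1
    have h1A : (0:ℝ) ≤ 1 - A := by linarith
    set U : ℝ := A + (1 - A) * u with hU
    set V : ℝ := A + (1 - A) * v with hV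
    have hAU : A ≤ U := by rw [hU]; nlinarith
    have hUV : U ≤ V := by rw [hU, hV]; nlinarith
    have hV1 : V ≤ 1 := by rw [hV]; nlinarith
    have hU0 : (0:ℝ) ≤ U := le_trans hA0.le hAU
    have hV0 : (0:ℝ) ≤ V := le_trans hU0 hUV
    have hU1 : U ≤ 1 := le_trans hUV hV1
    have hVU : V - U = (1 - A) * (v - u) := by rw [hU, hV]; ring
    have hfact : g v - g u = (∑ i ∈ Finset.range m, V ^ i * U ^ (m - 1 - i))
        * ((1 - A) * (v - u)) := by
      have h := geom_sum₂_mul V U m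
      have hgv : g v = V ^ m := rfl
      have hgu : g u = U ^ m := rfl
      rw [hgv, hgu, ← h, hVU]
    have hsumlb : (m : ℝ) * A ^ (m - 1) ≤ ∑ i ∈ Finset.range m, V ^ i * U ^ (m - 1 - i) := by
      calc (m : ℝ) * A ^ (m - 1) = ∑ _i ∈ Finset.range m, A ^ (m - 1) := by
            rw [Finset.sum_const, Finset.card_range, nsmul_eq_mul]
        _ ≤ _ := by
            refine Finset.sum_le_sum fun i hi => ?_
            have him : i < m := Finset.mem_range.mp hi
            have hexp : i + (m - 1 - i) = m - 1 := by omega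
            calc A ^ (m - 1) = A ^ i * A ^ (m - 1 - i) := by rw [← pow_add, hexp]
              _ ≤ V ^ i * U ^ (m - 1 - i) := by
                  apply mul_le_mul
                  · exact pow_le_pow_left₀ hA0.le (le_trans hAU hUV) i
                  · exact pow_le_pow_left₀ hA0.le hAU _
                  · exact pow_nonneg hA0.le _
                  · exact pow_nonneg hV0 _
    have hsumub : ∑ i ∈ Finset.range m, V ^ i * U ^ (m - 1 - i) ≤ (m : ℝ) := by
      calc ∑ i ∈ Finset.range m, V ^ i * U ^ (m - 1 - i)
          ≤ ∑ _i ∈ Finset.range m, (1:ℝ) := by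
            refine Finset.sum_le_sum fun i hi => ?_
            calc V ^ i * U ^ (m - 1 - i) ≤ 1 * 1 := by
                  apply mul_le_mul (pow_le_one₀ hV0 hV1) (pow_le_one₀ hU0 hU1)
                    (pow_nonneg hU0 _) (by norm_num)
              _ = 1 := by norm_num
        _ = (m : ℝ) := by rw [Finset.sum_const, Finset.card_range, nsmul_eq_mul, mul_one]
    have hvu : (0:ℝ) ≤ (1 - A) * (v - u) := mul_nonneg h1A (by linarith)
    constructor
    · rw [hfact, hμdef]
      calc (1 - A) * m * A ^ (m-1) * (v - u)
          = ((m:ℝ) * A ^ (m-1)) * ((1 - A) * (v - u)) := by ring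
        _ ≤ _ := mul_le_mul_of_nonneg_right hsumlb hvu
    · rw [hfact, hMdef]
      calc (∑ i ∈ Finset.range m, V ^ i * U ^ (m - 1 - i)) * ((1 - A) * (v - u))
          ≤ (m:ℝ) * ((1 - A) * (v - u)) := mul_le_mul_of_nonneg_right hsumub hvu
        _ = (1 - A) * m * (v - u) := by ring
  have hM : M ≤ ((t : ℝ) - 1) * μ := by
    have hAm : (0:ℝ) < A ^ (m - 1) := pow_pos hA0 _
    have hAinv : A⁻¹ ^ (m - 1) * A ^ (m - 1) = 1 := by
      rw [← mul_pow, inv_mul_cancel₀ hA0.ne', one_pow]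
    have htR : ((t : ℝ)) = 2 * N := by rw [htdef]; push_cast; ring
    have hNR : (1:ℝ) ≤ (N:ℝ) := by exact_mod_cast hN1
    have h1 : (1:ℝ) ≤ ((t : ℝ) - 1) * A ^ (m - 1) := by
      have h2 : A⁻¹ ^ (m-1) ≤ (t:ℝ) - 1 := by rw [htR]; linarith
      calc (1:ℝ) = A⁻¹ ^ (m-1) * A ^ (m-1) := hAinv.symm
        _ ≤ ((t : ℝ) - 1) * A ^ (m - 1) := mul_le_mul_of_nonneg_right h2 hAm.le
    have h1A : (0:ℝ) < 1 - A := by linarith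
    rw [hMdef, hμdef]
    nlinarith
  refine ⟨(t : ℝ) * A ^ m, (t : ℝ) * A ^ m + 2 * (1 - A ^ m), by ring, ?_⟩
  intro y hy
  have hg0 : g 0 = A ^ m := by rw [hgdef]; norm_num
  have hg1 : g 1 = 1 := by rw [hgdef]; norm_num
  have hAm1 : A ^ m ≤ 1 := pow_le_one₀ hA0.le hA1.le
  have hy1 : (t : ℝ) * g 0 ≤ y := by rw [hg0]; exact hy.1
  have hy2 : y ≤ (t : ℝ) * g 1 := by
    rw [hg1, mul_one]
    have h2 := hy.2
    have ht2 : (2:ℝ) ≤ (t:ℝ) := by exact_mod_cast ht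
    nlinarith
  obtain ⟨c, hcd, hcy⟩ := exists_digits_sum_eq t ht g μ M hμ hg hM y hy1 hy2
  refine ⟨fun j => A + (1 - A) * c j, ?_, ?_⟩
  · intro j
    obtain ⟨d, hd, hcd'⟩ := hcd j
    have hmem := mem_cantor_affine k (c j) d hd hcd'
    show A + (1 - A) * c j ∈ middleThirdsCantor
    rw [hδ, hA]
    exact hmem
  · rw [hcy]
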